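/- Let Ω be an open subset of ℝ^d, let θ : ℝ^d → ℝ be continuous with compact support contained in Ω, let φ, ψ : ℝ^d → ℝ be continuous and ℤ^d-periodic, and let δ : (0,∞) → (0,∞) be a function with δ(ε) → 0 as ε → 0⁺. Then, as ε → 0⁺, ∫_Ω θ(x) φ(x/ε) ψ(x/(ε δ(ε))) dx converges to (∫_{[0,1]^d} ψ(y) dy) · (∫_{[0,1]^d} φ(z) dz) · (∫_Ω θ(x) dx). -/

import Mathlib

open MeasureTheory Filter Topology Pointwise

/-- The unit cube `[0,1]^d` in `ℝ^d`, representing the torus `T^d`. -/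
def cube (d : ℕ) : Set (Fin d → ℝ) := Set.Icc 0 1

/-- A function on `ℝ^d` is `ℤ^d`-periodic. -/
def ZPeriodic {d : ℕ} (φ : (Fin d → ℝ) → ℝ) : Prop :=
  ∀ (x : Fin d → ℝ) (k : Fin d → ℤ), φ (x + fun i => (k i : ℝ)) = φ x

namespace TwoScaleAux

variable {d : ℕ}

lemma zper_sub {φ : (Fin d → ℝ) → ℝ} (hφ : ZPeriodic φ) (x : Fin d → ℝ) (k : Fin d → ℤ) :
    φ (x - fun i => (k i : ℝ)) = φ x := by
  have h := hφ (x - fun i => (k i : ℝ)) k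
  rw [sub_add_cancel] at h
  exact h.symm

lemma frac_mem_cube (x : Fin d → ℝ) :
    (x - fun i => ((⌊x i⌋ : ℤ) : ℝ)) ∈ cube d := by
  constructor
  · intro i
    simp only [Pi.sub_apply, Pi.zero_apply]
    linarith [Int.floor_le (x i)]
  · intro i
    simp only [Pi.sub_apply, Pi.one_apply]
    linarith [Int.lt_floor_add_one (x i)]

lemma exists_bound {φ : (Fin d → ℝ) → ℝ} (hφc : Continuous φ) (hφp : ZPeriodic φ) :
    ∃ C : ℝ, 0 ≤ C ∧ ∀ x, |φ x| ≤ C := by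
  obtain ⟨C, hC⟩ := (isCompact_Icc (a := (0 : Fin d → ℝ)) (b := 1)).exists_bound_of_continuousOn
    hφc.continuousOn
  refine ⟨max C 0, le_max_right _ _, fun x => ?_⟩
  have h1 : φ x = φ (x - fun i => ((⌊x i⌋ : ℤ) : ℝ)) := (zper_sub hφp x _).symm
  rw [h1]
  exact le_trans (hC _ (frac_mem_cube x)) (le_max_left _ _)

lemma unif_cont {φ : (Fin d → ℝ) → ℝ} (hφc : Continuous φ) (hφp : ZPeriodic φ) :
    ∀ r : ℝ, 0 < r → ∃ s : ℝ, 0 < s ∧ ∀ x y : Fin d → ℝ, dist x y < s → |φ x - φ y| < r := by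
  intro r hr
  have hK : IsCompact (Set.Icc (-2 : Fin d → ℝ) 2) := isCompact_Icc
  have hu := hK.uniformContinuousOn_of_continuous hφc.continuousOn
  rw [Metric.uniformContinuousOn_iff] at hu
  obtain ⟨s, hs, hsp⟩ := hu r hr
  refine ⟨min s 1, lt_min hs one_pos, fun x y hxy => ?_⟩
  set k : Fin d → ℤ := fun i => ⌊x i⌋ with hk
  set x' := x - fun i => ((k i : ℤ) : ℝ) with hx'
  set y' := y - fun i => ((k i : ℤ) : ℝ) with hy'
  have hfr : ∀ i, (0:ℝ) ≤ x' i ∧ x' i < 1 := by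
    intro i
    simp only [hx', Pi.sub_apply, hk]
    constructor
    · linarith [Int.floor_le (x i)]
    · linarith [Int.lt_floor_add_one (x i)]
  have hcoord : ∀ i, |y i - x i| < 1 := by
    intro i
    calc |y i - x i| = dist (y i) (x i) := (Real.dist_eq _ _).symm
      _ ≤ dist y x := dist_le_pi_dist y x i
      _ < min s 1 := by rwa [dist_comm] at hxy
      _ ≤ 1 := min_le_right _ _
  have hyx : ∀ i, y' i = x' i + (y i - x i) := by
    intro i; simp only [hx', hy', Pi.sub_apply]; ring
  have hx'mem : x' ∈ Set.Icc (-2 : Fin d → ℝ) 2 := by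
    constructor
    · intro i
      simp only [Pi.neg_apply, Pi.ofNat_apply]
      have := (hfr i).1
      norm_num
      linarith
    · intro i
      simp only [Pi.ofNat_apply]
      have := (hfr i).2
      norm_num
      linarith
  have hy'mem : y' ∈ Set.Icc (-2 : Fin d → ℝ) 2 := by
    constructor
    · intro i
      simp only [Pi.neg_apply, Pi.ofNat_apply]
      rw [hyx i]
      have h1 := (hfr i).1
      have h2 := abs_lt.mp (hcoord i)
      norm_num
      linarith [h2.1]
    · intro i
      simp only [Pi.ofNat_apply]
      rw [hyx i]
      have h1 := (hfr i).2
      have h2 := abs_lt.mp (hcoord i)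
      norm_num
      linarith [h2.2]
  have hdist : dist x' y' = dist x y := dist_sub_right x y _
  have hlt : dist x' y' < s := by
    rw [hdist]; exact lt_of_lt_of_le hxy (min_le_left _ _)
  have := hsp x' hx'mem y' hy'mem hlt
  rw [show φ x = φ x' from (zper_sub hφp x k).symm, show φ y = φ y' from (zper_sub hφp y k).symm]
  rwa [Real.dist_eq] at this


lemma volume_cube : volume (cube d) = 1 := by
  rw [cube, Real.volume_Icc_pi]
  simp

/-- periodicity in the form needed for fundamental-domain arguments -/
lemma zper_lattice {ψ : (Fin d → ℝ) → ℝ} (hψp : ZPeriodic ψ)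
    (g : Submodule.span ℤ (Set.range (Pi.basisFun ℝ (Fin d)))) (x : Fin d → ℝ) :
    ψ (g +ᵥ x) = ψ x := by
  have hmem := ((Pi.basisFun ℝ (Fin d)).mem_span_iff_repr_mem ℤ g.1).mp g.2
  simp only [Pi.basisFun_repr] at hmem
  choose kk hkk using hmem
  have : (g : Fin d → ℝ) = fun i => (kk i : ℝ) := by
    funext i
    exact (hkk i).symm
  show ψ ((g : Fin d → ℝ) + x) = ψ x
  rw [this, add_comm]
  exact hψp x kk

/-- the fundamental domain box is a.e. the Icc box -/
lemma box_ae (v : Fin d → ℝ) :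
    (v +ᵥ ZSpan.fundamentalDomain (Pi.basisFun ℝ (Fin d))) =ᵐ[volume] Set.Icc v (v + 1) := by
  have hbox : (v +ᵥ ZSpan.fundamentalDomain (Pi.basisFun ℝ (Fin d)))
      = {x : Fin d → ℝ | ∀ i, x i ∈ Set.Ico (v i) (v i + 1)} := by
    ext x
    simp only [Set.mem_vadd_set, ZSpan.mem_fundamentalDomain, Pi.basisFun_repr, Set.mem_Ico,
      Set.mem_setOf_eq]
    constructor
    · rintro ⟨y, hy, rfl⟩
      intro i
      have := hy i
      constructor
      · show v i ≤ v i + y i; linarith [this.1]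
      · show v i + y i < v i + 1; linarith [this.2]
    · intro h
      refine ⟨x - v, fun i => ?_, by simp⟩
      have := h i
      simp only [Set.mem_Ico, Pi.sub_apply]
      constructor <;> [linarith [this.1]; linarith [this.2]]
  rw [hbox]
  have hsub1 : {x : Fin d → ℝ | ∀ i, x i ∈ Set.Ico (v i) (v i + 1)} ⊆ Set.Icc v (v + 1) := by
    intro x hx
    constructor
    · intro i; exact (hx i).1
    · intro i; exact le_of_lt (by simpa using (hx i).2)
  have hsub2 : Set.Icc v (v + 1) \ {x : Fin d → ℝ | ∀ i, x i ∈ Set.Ico (v i) (v i + 1)}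
      ⊆ ⋃ i : Fin d, {x : Fin d → ℝ | x i = v i + 1} := by
    rintro x ⟨⟨h1, h2⟩, h3⟩
    simp only [Set.mem_setOf_eq, Set.mem_Ico, not_forall] at h3
    obtain ⟨i, hi⟩ := h3
    rw [Set.mem_iUnion]
    refine ⟨i, ?_⟩
    have hl := h1 i
    have hu : x i ≤ v i + 1 := by simpa using h2 i
    simp only [Set.mem_setOf_eq]
    rcases not_and_or.mp hi with h | h
    · exact absurd hl h
    · push_neg at h; linarith
  have hnull : volume (⋃ i : Fin d, {x : Fin d → ℝ | x i = v i + 1}) = 0 := by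
    refine measure_iUnion_null fun i => ?_
    rw [MeasureTheory.volume_pi]
    exact Measure.pi_hyperplane (fun _ => (volume : Measure ℝ)) i (v i + 1)
  refine (MeasureTheory.ae_eq_set).2 ⟨?_, ?_⟩
  · rw [Set.diff_eq_empty.2 hsub1]; simp
  · exact measure_mono_null hsub2 hnull

lemma integral_translate_box {ψ : (Fin d → ℝ) → ℝ} (hψp : ZPeriodic ψ) (v : Fin d → ℝ) :
    ∫ t in Set.Icc v (v + 1), ψ t = ∫ t in cube d, ψ t := by
  set b := Pi.basisFun ℝ (Fin d) with hb
  haveI : VAddCommClass (Fin d → ℝ) (Submodule.span ℤ (Set.range b)) (Fin d → ℝ) :=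
    ⟨fun a g x => by
      show a + ((g : Fin d → ℝ) + x) = (g : Fin d → ℝ) + (a + x)
      ring⟩
  haveI : MeasurableVAdd (↥(Submodule.span ℤ (Set.range ⇑b))) (Fin d → ℝ) :=
    MeasurableVAdd.mk (toMeasurableConstVAdd := ⟨fun c => by
        have : Measurable fun x : Fin d → ℝ => (c : Fin d → ℝ) + x := measurable_const_add _
        exact this⟩)
      (fun x => by
        have : Measurable fun c : ↥(Submodule.span ℤ (Set.range ⇑b)) => (c : Fin d → ℝ) + x :=
          measurable_subtype_coe.add_const x
        exact this)
  haveI : VAddInvariantMeasure (↥(Submodule.span ℤ (Set.range ⇑b))) (Fin d → ℝ) volume :=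
    ⟨fun c s hs => by
      have : ((fun x : Fin d → ℝ => c +ᵥ x) ⁻¹' s) = ((fun x : Fin d → ℝ => (c : Fin d → ℝ) + x) ⁻¹' s) := rfl
      rw [this, measure_preimage_add]⟩
  have hFD := ZSpan.isAddFundamentalDomain b (volume : Measure (Fin d → ℝ))
  have hFD2 : IsAddFundamentalDomain (Submodule.span ℤ (Set.range b))
      (v +ᵥ ZSpan.fundamentalDomain b) volume := hFD.vadd_of_comm v
  have hper : ∀ (g : Submodule.span ℤ (Set.range b)) (x : Fin d → ℝ), ψ (g +ᵥ x) = ψ x :=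
    fun g x => zper_lattice hψp g x
  calc ∫ t in Set.Icc v (v + 1), ψ t
      = ∫ t in v +ᵥ ZSpan.fundamentalDomain b, ψ t := (setIntegral_congr_set (box_ae v)).symm
    _ = ∫ t in ZSpan.fundamentalDomain b, ψ t := hFD2.setIntegral_eq hFD hper
    _ = ∫ t in (0 : Fin d → ℝ) +ᵥ ZSpan.fundamentalDomain b, ψ t := by rw [zero_vadd]
    _ = ∫ t in Set.Icc (0 : Fin d → ℝ) (0 + 1), ψ t := setIntegral_congr_set (box_ae 0)
    _ = ∫ t in cube d, ψ t := by rw [zero_add]; rfl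

lemma integral_cube_sub {ψ : (Fin d → ℝ) → ℝ} (hψp : ZPeriodic ψ) (y : Fin d → ℝ) :
    ∫ t in cube d, ψ (y - t) = ∫ t in cube d, ψ t := by
  have hmp : MeasurePreserving (fun t : Fin d → ℝ => y - t) volume volume :=
    Measure.measurePreserving_sub_left volume y
  have hemb : MeasurableEmbedding (fun t : Fin d → ℝ => y - t) :=
    (MeasurableEquiv.subLeft y).measurableEmbedding
  have hpre : cube d = (fun t : Fin d → ℝ => y - t) ⁻¹' (Set.Icc (y - 1) (y - 1 + 1)) := by
    ext t
    simp only [Set.mem_preimage, Set.mem_Icc, cube]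
    rw [sub_add_cancel]
    constructor
    · rintro ⟨h1, h2⟩
      constructor
      · intro i
        simp only [Pi.sub_apply, Pi.one_apply]
        have := h2 i
        simp only [Pi.one_apply] at this
        linarith
      · intro i
        simp only [Pi.sub_apply]
        have := h1 i
        simp only [Pi.zero_apply] at this
        linarith
    · rintro ⟨h1, h2⟩
      constructor
      · intro i
        have := h2 i
        simp only [Pi.sub_apply] at this
        simp only [Pi.zero_apply]
        linarith
      · intro i
        have := h1 i
        simp only [Pi.sub_apply, Pi.one_apply] at this ⊢
        linarith
  calc ∫ t in cube d, ψ (y - t)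
      = ∫ t in (fun t : Fin d → ℝ => y - t) ⁻¹' (Set.Icc (y - 1) (y - 1 + 1)), ψ (y - t) := by
        rw [← hpre]
    _ = ∫ t in Set.Icc (y - 1) (y - 1 + 1), ψ t := hmp.setIntegral_preimage_emb hemb ψ _
    _ = ∫ t in cube d, ψ t := integral_translate_box hψp (y - 1)

lemma norm_le_one_of_mem_cube {t : Fin d → ℝ} (ht : t ∈ cube d) : ‖t‖ ≤ 1 := by
  rw [pi_norm_le_iff_of_nonneg zero_le_one]
  intro i
  rw [Real.norm_eq_abs, abs_le]
  exact ⟨by linarith [ht.1 i, (show (0:(Fin d→ℝ)) i = 0 from rfl)], by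
    have h1 := ht.2 i
    have : (1 : Fin d → ℝ) i = 1 := rfl
    linarith [h1, this]⟩

lemma integrable_prod_aux {K : Set (Fin d → ℝ)} (hK : IsCompact K)
    {H : (Fin d → ℝ) × (Fin d → ℝ) → ℝ} (hHc : Continuous H) {C : ℝ}
    (hC : ∀ p, |H p| ≤ C)
    (hH0 : ∀ t ∈ cube d, ∀ x : Fin d → ℝ, x ∉ K → H (t, x) = 0) :
    Integrable H ((volume.restrict (cube d)).prod volume) := by
  have hcm : MeasurableSet (cube d) := measurableSet_Icc
  have hKm : MeasurableSet K := hK.isClosed.measurableSet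
  have haesm : AEStronglyMeasurable H ((volume.restrict (cube d)).prod volume) :=
    hHc.aestronglyMeasurable
  have h1 : Integrable (fun _ : Fin d → ℝ => (1:ℝ)) (volume.restrict (cube d)) := by
    refine integrableOn_const ?_
    rw [volume_cube]; exact ENNReal.one_lt_top.ne
  have h2 : Integrable (K.indicator fun _ => C) volume := by
    rw [integrable_indicator_iff hKm]
    exact integrableOn_const hK.measure_lt_top.ne
  have hbd := h1.mul_prod h2
  have hae : ∀ᵐ p : (Fin d → ℝ) × (Fin d → ℝ) ∂((volume.restrict (cube d)).prod volume),
      p.1 ∈ cube d := by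
    rw [MeasureTheory.ae_iff]
    have hset : {p : (Fin d → ℝ) × (Fin d → ℝ) | ¬ p.1 ∈ cube d} = (cube d)ᶜ ×ˢ Set.univ := by
      ext p; simp [Set.mem_prod]
    rw [hset, Measure.prod_prod, Measure.restrict_apply hcm.compl]
    simp
  refine hbd.mono' haesm ?_
  filter_upwards [hae] with p hp
  by_cases hpK : p.2 ∈ K
  · rw [Real.norm_eq_abs]
    calc |H p| ≤ C := hC p
      _ = 1 * K.indicator (fun _ => C) p.2 := by rw [Set.indicator_of_mem hpK]; ring
  · have : H p = 0 := by
      have := hH0 p.1 hp p.2 hpK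
      simpa using this
    rw [this, Set.indicator_of_notMem hpK]
    simp

lemma keyC {g ψ : (Fin d → ℝ) → ℝ} (hgc : Continuous g) (hgs : HasCompactSupport g)
    (hψc : Continuous ψ) (hψp : ZPeriodic ψ) {Cψ : ℝ} (hCψ : ∀ x, |ψ x| ≤ Cψ)
    {η : ℝ} (hη : 0 < η) {B : ℝ}
    (hB : ∀ t ∈ cube d, (∫ x, |g (x + η • t) - g x|) ≤ B) :
    |(∫ x, g x * ψ (η⁻¹ • x)) - (∫ y in cube d, ψ y) * ∫ x, g x| ≤ Cψ * B := by
  have hCψ0 : 0 ≤ Cψ := le_trans (abs_nonneg _) (hCψ 0)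
  obtain ⟨Cg, hCg'⟩ := hgc.bounded_above_of_compact_support hgs
  have hCg : ∀ x, |g x| ≤ Cg := fun x => by
    have := hCg' x
    rwa [Real.norm_eq_abs] at this
  -- compact sets
  set K : Set (Fin d → ℝ) := Metric.cthickening η (tsupport g) with hKdef
  have hKcomp : IsCompact K := hgs.cthickening
  have htsubK : tsupport g ⊆ K := Metric.self_subset_cthickening _
  have hsmul_norm : ∀ t ∈ cube d, ‖η • t‖ ≤ η := by
    intro t ht
    rw [norm_smul, Real.norm_eq_abs, abs_of_pos hη]
    calc η * ‖t‖ ≤ η * 1 := by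
          exact mul_le_mul_of_nonneg_left (norm_le_one_of_mem_cube ht) hη.le
      _ = η := mul_one η
  have hshift_mem : ∀ t ∈ cube d, ∀ x : Fin d → ℝ, x ∉ K → g (x + η • t) = 0 := by
    intro t ht x hx
    by_contra hne
    have hmem : x + η • t ∈ tsupport g := subset_closure (by exact hne)
    have : x ∈ K := by
      refine Metric.mem_cthickening_of_dist_le x (x + η • t) η _ hmem ?_
      rw [dist_eq_norm]
      simpa using hsmul_norm t ht
    exact hx this
  -- the two product functions
  set f1 : (Fin d → ℝ) → (Fin d → ℝ) → ℝ := fun t x => g (x + η • t) * ψ (η⁻¹ • x) with hf1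
  set f2 : (Fin d → ℝ) → (Fin d → ℝ) → ℝ := fun t x => g x * ψ (η⁻¹ • x - t) with hf2
  have hgcont_shift : Continuous fun p : (Fin d → ℝ) × (Fin d → ℝ) => g (p.2 + η • p.1) :=
    hgc.comp (continuous_snd.add (continuous_fst.const_smul η))
  have hint1 : Integrable (Function.uncurry f1) ((volume.restrict (cube d)).prod volume) := by
    refine integrable_prod_aux hKcomp ?_ (C := Cg * Cψ) ?_ ?_
    · exact hgcont_shift.mul (hψc.comp (continuous_snd.const_smul η⁻¹))
    · intro p
      rw [Function.uncurry, abs_mul]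
      exact mul_le_mul (hCg _) (hCψ _) (abs_nonneg _) (le_trans (abs_nonneg _) (hCg 0))
    · intro t ht x hx
      show g (x + η • t) * ψ (η⁻¹ • x) = 0
      rw [hshift_mem t ht x hx, zero_mul]
  have hint2 : Integrable (Function.uncurry f2) ((volume.restrict (cube d)).prod volume) := by
    refine integrable_prod_aux hgs ?_ (C := Cg * Cψ) ?_ ?_
    · exact (hgc.comp continuous_snd).mul
        (hψc.comp ((continuous_snd.const_smul η⁻¹).sub continuous_fst))
    · intro p
      rw [Function.uncurry, abs_mul]
      exact mul_le_mul (hCg _) (hCψ _) (abs_nonneg _) (le_trans (abs_nonneg _) (hCg 0))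
    · intro t ht x hx
      show g x * ψ (η⁻¹ • x - t) = 0
      rw [image_eq_zero_of_notMem_tsupport hx, zero_mul]
  have hIg0 : Integrable g volume := hgc.integrable_of_hasCompactSupport hgs
  have hIg : Integrable (fun x => g x * ψ (η⁻¹ • x)) volume := by
    refine Continuous.integrable_of_hasCompactSupport
      (hgc.mul (hψc.comp (continuous_const_smul _))) hgs.mul_right
  have hIgt : ∀ t : Fin d → ℝ, Integrable (fun x => g (x + η • t) * ψ (η⁻¹ • x)) volume := by
    intro t
    refine Continuous.integrable_of_hasCompactSupport
      ((hgc.comp (continuous_id.add continuous_const)).mul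
        (hψc.comp (continuous_const_smul _))) ?_
    exact (hgs.comp_homeomorph (Homeomorph.addRight (η • t))).mul_right
  -- step 1 : translate x
  have hstep1 : ∀ t : Fin d → ℝ, (∫ x, f1 t x) = ∫ x, f2 t x := by
    intro t
    have h := integral_add_right_eq_self (μ := volume)
      (fun x => g x * ψ (η⁻¹ • x - t)) (η • t)
    rw [hf1, hf2]
    rw [← h]
    congr 1
    funext x
    have hkey : η⁻¹ • (x + η • t) - t = η⁻¹ • x := by
      rw [smul_add, smul_smul, inv_mul_cancel₀ hη.ne', one_smul]
      abel
    rw [hkey]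
  have hA1 : (∫ t in cube d, ∫ x, f1 t x) = ∫ t in cube d, ∫ x, f2 t x :=
    integral_congr_ae (Filter.Eventually.of_forall fun t => hstep1 t)
  have hswap : (∫ t in cube d, ∫ x, f2 t x) = ∫ x, ∫ t in cube d, f2 t x :=
    integral_integral_swap hint2
  have havg : ∀ x : Fin d → ℝ, (∫ t in cube d, f2 t x) = g x * ∫ y in cube d, ψ y := by
    intro t
    rw [hf2]
    rw [MeasureTheory.integral_const_mul]
    rw [integral_cube_sub hψp]
  have hA : (∫ t in cube d, ∫ x, f1 t x) = (∫ y in cube d, ψ y) * ∫ x, g x := by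
    rw [hA1, hswap]
    have : (fun x => ∫ t in cube d, f2 t x) = fun x => g x * ∫ y in cube d, ψ y :=
      funext fun x => havg x
    rw [this, MeasureTheory.integral_mul_const, mul_comm]
  -- step 4 : compare with the constant-in-t integrand
  have hconst : (∫ _t in cube d, (∫ x, g x * ψ (η⁻¹ • x))) = ∫ x, g x * ψ (η⁻¹ • x) := by
    rw [setIntegral_const, measureReal_def, volume_cube]
    simp
  have hinnerint : Integrable (fun t => ∫ x, f1 t x) (volume.restrict (cube d)) :=
    hint1.integral_prod_left
  have hconstint : Integrable (fun _t : Fin d → ℝ => (∫ x, g x * ψ (η⁻¹ • x)))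
      (volume.restrict (cube d)) := by
    refine integrableOn_const ?_
    rw [volume_cube]; exact ENNReal.one_lt_top.ne
  have hdiff : (∫ x, g x * ψ (η⁻¹ • x)) - (∫ y in cube d, ψ y) * ∫ x, g x
      = ∫ t in cube d, ((∫ x, g x * ψ (η⁻¹ • x)) - ∫ x, f1 t x) := by
    rw [integral_sub hconstint hinnerint, hconst, hA]
  rw [hdiff]
  have hptbound : ∀ t ∈ cube d, ‖(∫ x, g x * ψ (η⁻¹ • x)) - ∫ x, f1 t x‖ ≤ Cψ * B := by
    intro t ht
    have hsub : (∫ x, g x * ψ (η⁻¹ • x)) - (∫ x, f1 t x)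
        = ∫ x, (g x - g (x + η • t)) * ψ (η⁻¹ • x) := by
      rw [hf1, ← integral_sub hIg (hIgt t)]
      congr 1
      funext x
      ring
    rw [hsub]
    have hintdiff : Integrable (fun x => |g (x + η • t) - g x| * Cψ) volume := by
      refine Continuous.integrable_of_hasCompactSupport
        ((continuous_abs.comp ((hgc.comp (continuous_id.add continuous_const)).sub hgc)).mul
          continuous_const) ?_
      refine HasCompactSupport.mul_right ?_
      refine HasCompactSupport.abs ?_
      have h1 : HasCompactSupport (fun x : Fin d → ℝ => g (x + η • t)) :=
        hgs.comp_homeomorph (Homeomorph.addRight (η • t))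
      have h2 := h1.add (hgs.comp_left neg_zero)
      exact h2
    calc ‖∫ x, (g x - g (x + η • t)) * ψ (η⁻¹ • x)‖
        ≤ ∫ x, ‖(g x - g (x + η • t)) * ψ (η⁻¹ • x)‖ := norm_integral_le_integral_norm _
      _ ≤ ∫ x, |g (x + η • t) - g x| * Cψ := by
          refine integral_mono_of_nonneg (Filter.Eventually.of_forall fun x => norm_nonneg _)
            hintdiff (Filter.Eventually.of_forall fun x => ?_)
          show ‖(g x - g (x + η • t)) * ψ (η⁻¹ • x)‖ ≤ |g (x + η • t) - g x| * Cψ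
          rw [norm_mul, Real.norm_eq_abs, Real.norm_eq_abs, abs_sub_comm]
          exact mul_le_mul_of_nonneg_left (hCψ _) (abs_nonneg _)
      _ = (∫ x, |g (x + η • t) - g x|) * Cψ := by rw [MeasureTheory.integral_mul_const]
      _ ≤ B * Cψ := mul_le_mul_of_nonneg_right (hB t ht) hCψ0
      _ = Cψ * B := mul_comm _ _
  have haesm2 : AEStronglyMeasurable
      (fun t => (∫ x, g x * ψ (η⁻¹ • x)) - ∫ x, f1 t x) (volume.restrict (cube d)) :=
    aestronglyMeasurable_const.sub hinnerint.aestronglyMeasurable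
  have hfin : volume (cube d) < ⊤ := by rw [volume_cube]; exact ENNReal.one_lt_top
  calc |∫ t in cube d, ((∫ x, g x * ψ (η⁻¹ • x)) - ∫ x, f1 t x)|
      = ‖∫ t in cube d, ((∫ x, g x * ψ (η⁻¹ • x)) - ∫ x, f1 t x)‖ := (Real.norm_eq_abs _).symm
    _ ≤ (Cψ * B) * (volume (cube d)).toReal :=
        norm_setIntegral_le_of_norm_le_const hfin hptbound
    _ = Cψ * B := by rw [volume_cube]; simp


lemma smul_cube_norm {c : ℝ} (hc : 0 ≤ c) {t : Fin d → ℝ} (ht : t ∈ cube d) : ‖c • t‖ ≤ c := by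
  rw [norm_smul, Real.norm_eq_abs, abs_of_nonneg hc]
  calc c * ‖t‖ ≤ c * 1 := mul_le_mul_of_nonneg_left (norm_le_one_of_mem_cube ht) hc
    _ = c := mul_one c

lemma thetaL1 {θ : (Fin d → ℝ) → ℝ} (hθc : Continuous θ) (hθs : HasCompactSupport θ)
    {r1 s : ℝ} (hr1 : ∀ a b : Fin d → ℝ, dist a b < s → |θ a - θ b| ≤ r1)
    {h : Fin d → ℝ} (hh : ‖h‖ < s) (hh1 : ‖h‖ ≤ 1) :
    (∫ x, |θ (x + h) - θ x|) ≤ r1 * (volume (Metric.cthickening 1 (tsupport θ))).toReal := by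
  set K := Metric.cthickening 1 (tsupport θ) with hK
  have hKc : IsCompact K := hθs.cthickening
  have hzero : ∀ x : Fin d → ℝ, x ∉ K → |θ (x + h) - θ x| = 0 := by
    intro x hx
    have h1 : θ x = 0 :=
      image_eq_zero_of_notMem_tsupport (fun hm => hx (Metric.self_subset_cthickening _ hm))
    have h2 : θ (x + h) = 0 := by
      by_contra hne
      have hmem : x + h ∈ tsupport θ := subset_closure hne
      refine hx (Metric.mem_cthickening_of_dist_le x (x + h) 1 _ hmem ?_)
      rw [dist_eq_norm]
      simpa using hh1
    rw [h1, h2]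
    simp
  have hbd : ∀ x ∈ K, ‖|θ (x + h) - θ x|‖ ≤ r1 := by
    intro x _
    rw [Real.norm_eq_abs, abs_abs]
    refine hr1 (x + h) x ?_
    rw [dist_eq_norm]
    simpa using hh
  have haesm : AEStronglyMeasurable (fun x => |θ (x + h) - θ x|) (volume.restrict K) :=
    (continuous_abs.comp ((hθc.comp (continuous_id.add continuous_const)).sub hθc)).aestronglyMeasurable
  calc (∫ x, |θ (x + h) - θ x|)
      = ∫ x in K, |θ (x + h) - θ x| := (setIntegral_eq_integral_of_forall_compl_eq_zero hzero).symm
    _ ≤ ‖∫ x in K, |θ (x + h) - θ x|‖ := le_abs_self _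
    _ ≤ r1 * (volume K).toReal :=
        norm_setIntegral_le_of_norm_le_const hKc.measure_lt_top hbd

end TwoScaleAux

open TwoScaleAux

set_option maxHeartbeats 1000000 in
/-- for `θ` continuous with compact support in the open set `Ω`,
`φ, ψ` continuous and `ℤ^d`-periodic, and `δ : (0,∞) → (0,∞)` with `δ(ε) → 0` as
`ε → 0⁺`, one has
`∫_Ω θ(x) φ(x/ε) ψ(x/(ε δ(ε))) dx → (∫ ψ)(∫ φ)(∫_Ω θ)` as `ε → 0⁺`. -/
theorem statement1 (d : ℕ) (Ω : Set (Fin d → ℝ)) (hΩ : IsOpen Ω)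
    (θ φ ψ : (Fin d → ℝ) → ℝ) (δ : ℝ → ℝ)
    (hθc : Continuous θ) (hθs : HasCompactSupport θ) (hθΩ : tsupport θ ⊆ Ω)
    (hφc : Continuous φ) (hφp : ZPeriodic φ)
    (hψc : Continuous ψ) (hψp : ZPeriodic ψ)
    (hδpos : ∀ ε : ℝ, 0 < ε → 0 < δ ε)
    (hδ0 : Tendsto δ (𝓝[>] (0:ℝ)) (𝓝 0)) :
    Tendsto (fun ε : ℝ => ∫ x in Ω, θ x * φ (ε⁻¹ • x) * ψ ((ε * δ ε)⁻¹ • x))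
      (𝓝[>] (0:ℝ))
      (𝓝 ((∫ y in cube d, ψ y) * (∫ z in cube d, φ z) * ∫ x in Ω, θ x)) := by
  have hθzero : ∀ x ∉ Ω, θ x = 0 := fun x hx =>
    image_eq_zero_of_notMem_tsupport (fun hmem => hx (hθΩ hmem))
  have hTeq : (∫ x in Ω, θ x) = ∫ x, θ x :=
    setIntegral_eq_integral_of_forall_compl_eq_zero hθzero
  have hfun : (fun ε : ℝ => ∫ x in Ω, θ x * φ (ε⁻¹ • x) * ψ ((ε * δ ε)⁻¹ • x))
      = fun ε : ℝ => ∫ x, θ x * φ (ε⁻¹ • x) * ψ ((ε * δ ε)⁻¹ • x) := by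
    funext ε
    exact setIntegral_eq_integral_of_forall_compl_eq_zero
      (fun x hx => by rw [hθzero x hx, zero_mul, zero_mul])
  rw [hfun, hTeq]
  obtain ⟨Cφ, hCφ0, hCφ⟩ := exists_bound hφc hφp
  obtain ⟨Cψ, hCψ0, hCψ⟩ := exists_bound hψc hψp
  have hKc : IsCompact (Metric.cthickening 1 (tsupport θ)) := hθs.cthickening
  set MK := (volume (Metric.cthickening 1 (tsupport θ))).toReal with hMKdef
  have hMK0 : 0 ≤ MK := ENNReal.toReal_nonneg
  have hθint : Integrable θ volume := hθc.integrable_of_hasCompactSupport hθs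
  set Tθ := ∫ x, |θ x| with hTθdef
  have hTθ0 : 0 ≤ Tθ := integral_nonneg fun x => abs_nonneg _
  have habsθint : Integrable (fun x => |θ x|) volume := hθint.abs
  have hpsibar : |∫ y in cube d, ψ y| ≤ Cψ := by
    rw [← Real.norm_eq_abs]
    calc ‖∫ y in cube d, ψ y‖ ≤ Cψ * (volume (cube d)).toReal :=
          norm_setIntegral_le_of_norm_le_const (by rw [volume_cube]; exact ENNReal.one_lt_top)
            (fun y _ => by rw [Real.norm_eq_abs]; exact hCψ y)
      _ = Cψ := by rw [volume_cube]; simp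
  rw [Metric.tendsto_nhdsWithin_nhds]
  intro r hr
  set D1 := (Cψ + 1) * ((Cφ + 1) * (MK + 1)) with hD1def
  have hD1pos : 0 < D1 := by positivity
  set r1 := r / (4 * D1) with hr1def
  have hr1pos : 0 < r1 := by positivity
  set D2 := (Cψ + 1) * (Tθ + 1) with hD2def
  have hD2pos : 0 < D2 := by positivity
  set r2 := r / (4 * D2) with hr2def
  have hr2pos : 0 < r2 := by positivity
  have hθu := hθs.uniformContinuous_of_continuous hθc
  rw [Metric.uniformContinuous_iff] at hθu
  obtain ⟨sθ, hsθpos, hsθ⟩ := hθu r1 hr1pos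
  have hθbd : ∀ a b : Fin d → ℝ, dist a b < sθ → |θ a - θ b| ≤ r1 := by
    intro a b hab
    have := hsθ hab
    rw [Real.dist_eq] at this
    exact this.le
  obtain ⟨sφ, hsφpos, hsφ⟩ := unif_cont hφc hφp r2 hr2pos
  rw [Metric.tendsto_nhdsWithin_nhds] at hδ0
  obtain ⟨s2, hs2pos, hs2⟩ := hδ0 (min sφ 1) (lt_min hsφpos one_pos)
  refine ⟨min (min sθ 1) s2, by positivity, ?_⟩
  intro ε hε hdist
  have hεpos : 0 < ε := hε
  rw [Real.dist_eq, sub_zero, abs_of_pos hεpos] at hdist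
  have hεsθ : ε < sθ := lt_of_lt_of_le hdist (le_trans (min_le_left _ _) (min_le_left _ _))
  have hε1 : ε < 1 := lt_of_lt_of_le hdist (le_trans (min_le_left _ _) (min_le_right _ _))
  have hεs2 : ε < s2 := lt_of_lt_of_le hdist (min_le_right _ _)
  have hδb := hs2 hε (by rw [Real.dist_eq, sub_zero, abs_of_pos hεpos]; exact hεs2)
  rw [Real.dist_eq, sub_zero, abs_of_pos (hδpos ε hεpos)] at hδb
  have hδφ : δ ε < sφ := lt_of_lt_of_le hδb (min_le_left _ _)
  have hδ1 : δ ε < 1 := lt_of_lt_of_le hδb (min_le_right _ _)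
  have hδp : 0 < δ ε := hδpos ε hεpos
  have hηpos : 0 < ε * δ ε := mul_pos hεpos hδp
  have hηε : ε * δ ε ≤ ε := by nlinarith
  -- B2 bound for θ at scale ε
  have hB2 : ∀ t ∈ cube d, (∫ x, |θ (x + ε • t) - θ x|) ≤ r1 * MK := by
    intro t ht
    have hn : ‖ε • t‖ ≤ ε := smul_cube_norm hεpos.le ht
    exact thetaL1 hθc hθs hθbd (lt_of_le_of_lt hn hεsθ) (le_trans hn hε1.le)
  -- B1 bound for G at scale ε * δ ε
  have hGc : Continuous (fun x : Fin d → ℝ => θ x * φ (ε⁻¹ • x)) :=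
    hθc.mul (hφc.comp (continuous_const_smul _))
  have hGs : HasCompactSupport (fun x : Fin d → ℝ => θ x * φ (ε⁻¹ • x)) := hθs.mul_right
  have hB1 : ∀ t ∈ cube d,
      (∫ x, |θ (x + (ε * δ ε) • t) * φ (ε⁻¹ • (x + (ε * δ ε) • t)) - θ x * φ (ε⁻¹ • x)|)
        ≤ Cφ * (r1 * MK) + r2 * Tθ := by
    intro t ht
    have hn : ‖(ε * δ ε) • t‖ ≤ ε * δ ε := smul_cube_norm hηpos.le ht
    have hshift_eq : ∀ x : Fin d → ℝ, ε⁻¹ • (x + (ε * δ ε) • t) = ε⁻¹ • x + (δ ε) • t := by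
      intro x
      rw [smul_add, smul_smul, ← mul_assoc, inv_mul_cancel₀ hεpos.ne', one_mul]
    have hφdiff : ∀ x : Fin d → ℝ, |φ (ε⁻¹ • (x + (ε * δ ε) • t)) - φ (ε⁻¹ • x)| ≤ r2 := by
      intro x
      rw [hshift_eq]
      have hd : dist (ε⁻¹ • x + (δ ε) • t) (ε⁻¹ • x) < sφ := by
        rw [dist_eq_norm, add_sub_cancel_left]
        exact lt_of_le_of_lt (smul_cube_norm hδp.le ht) hδφ
      exact (hsφ _ _ hd).le
    have hpt : ∀ x : Fin d → ℝ,
        |θ (x + (ε * δ ε) • t) * φ (ε⁻¹ • (x + (ε * δ ε) • t)) - θ x * φ (ε⁻¹ • x)|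
          ≤ |θ (x + (ε * δ ε) • t) - θ x| * Cφ + |θ x| * r2 := by
      intro x
      have hsplit : θ (x + (ε * δ ε) • t) * φ (ε⁻¹ • (x + (ε * δ ε) • t)) - θ x * φ (ε⁻¹ • x)
          = (θ (x + (ε * δ ε) • t) - θ x) * φ (ε⁻¹ • (x + (ε * δ ε) • t))
            + θ x * (φ (ε⁻¹ • (x + (ε * δ ε) • t)) - φ (ε⁻¹ • x)) := by ring
      rw [hsplit]
      calc |(θ (x + (ε * δ ε) • t) - θ x) * φ (ε⁻¹ • (x + (ε * δ ε) • t))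
            + θ x * (φ (ε⁻¹ • (x + (ε * δ ε) • t)) - φ (ε⁻¹ • x))|
          ≤ |(θ (x + (ε * δ ε) • t) - θ x) * φ (ε⁻¹ • (x + (ε * δ ε) • t))|
            + |θ x * (φ (ε⁻¹ • (x + (ε * δ ε) • t)) - φ (ε⁻¹ • x))| := abs_add_le _ _
        _ ≤ |θ (x + (ε * δ ε) • t) - θ x| * Cφ + |θ x| * r2 := by
            rw [abs_mul, abs_mul]
            exact add_le_add (mul_le_mul_of_nonneg_left (hCφ _) (abs_nonneg _))
              (mul_le_mul_of_nonneg_left (hφdiff x) (abs_nonneg _))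
    have hint1 : Integrable (fun x => |θ (x + (ε * δ ε) • t) - θ x| * Cφ) volume := by
      refine Continuous.integrable_of_hasCompactSupport
        ((continuous_abs.comp ((hθc.comp (continuous_id.add continuous_const)).sub hθc)).mul
          continuous_const) ?_
      refine HasCompactSupport.mul_right ?_
      refine HasCompactSupport.abs ?_
      have h1 : HasCompactSupport (fun x : Fin d → ℝ => θ (x + (ε * δ ε) • t)) :=
        hθs.comp_homeomorph (Homeomorph.addRight ((ε * δ ε) • t))
      exact h1.add (hθs.comp_left neg_zero)
    have hint2 : Integrable (fun x : Fin d → ℝ => |θ x| * r2) volume := habsθint.mul_const r2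
    calc (∫ x, |θ (x + (ε * δ ε) • t) * φ (ε⁻¹ • (x + (ε * δ ε) • t)) - θ x * φ (ε⁻¹ • x)|)
        ≤ ∫ x, (|θ (x + (ε * δ ε) • t) - θ x| * Cφ + |θ x| * r2) := by
          refine integral_mono_of_nonneg (Filter.Eventually.of_forall fun x => abs_nonneg _)
            (hint1.add hint2) (Filter.Eventually.of_forall fun x => hpt x)
      _ = (∫ x, |θ (x + (ε * δ ε) • t) - θ x|) * Cφ + (∫ x, |θ x|) * r2 := by
          rw [integral_add hint1 hint2, MeasureTheory.integral_mul_const,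
            MeasureTheory.integral_mul_const]
      _ ≤ (r1 * MK) * Cφ + Tθ * r2 := by
          refine add_le_add (mul_le_mul_of_nonneg_right ?_ hCφ0) (le_of_eq rfl)
          have hn2 : ‖(ε * δ ε) • t‖ < sθ := lt_of_le_of_lt hn (lt_of_le_of_lt hηε hεsθ)
          have hn3 : ‖(ε * δ ε) • t‖ ≤ 1 := le_trans hn (le_trans hηε hε1.le)
          exact thetaL1 hθc hθs hθbd hn2 hn3
      _ = Cφ * (r1 * MK) + r2 * Tθ := by ring
  -- apply the key lemma twice
  have hkey1 : |(∫ x, (θ x * φ (ε⁻¹ • x)) * ψ ((ε * δ ε)⁻¹ • x))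
      - (∫ y in cube d, ψ y) * ∫ x, θ x * φ (ε⁻¹ • x)| ≤ Cψ * (Cφ * (r1 * MK) + r2 * Tθ) :=
    keyC hGc hGs hψc hψp hCψ hηpos hB1
  have hkey2 : |(∫ x, θ x * φ (ε⁻¹ • x)) - (∫ z in cube d, φ z) * ∫ x, θ x| ≤ Cφ * (r1 * MK) :=
    keyC hθc hθs hφc hφp hCφ hεpos hB2
  -- combine
  rw [Real.dist_eq]
  have htri : |(∫ x, θ x * φ (ε⁻¹ • x) * ψ ((ε * δ ε)⁻¹ • x))
      - (∫ y in cube d, ψ y) * (∫ z in cube d, φ z) * ∫ x, θ x|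
      ≤ Cψ * (Cφ * (r1 * MK) + r2 * Tθ) + Cψ * (Cφ * (r1 * MK)) := by
    have heq : (∫ x, θ x * φ (ε⁻¹ • x) * ψ ((ε * δ ε)⁻¹ • x))
        - (∫ y in cube d, ψ y) * (∫ z in cube d, φ z) * ∫ x, θ x
        = ((∫ x, (θ x * φ (ε⁻¹ • x)) * ψ ((ε * δ ε)⁻¹ • x))
            - (∫ y in cube d, ψ y) * ∫ x, θ x * φ (ε⁻¹ • x))
          + (∫ y in cube d, ψ y) * ((∫ x, θ x * φ (ε⁻¹ • x))
            - (∫ z in cube d, φ z) * ∫ x, θ x) := by ring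
    rw [heq]
    calc |_ + _| ≤ _ := abs_add_le _ _
      _ ≤ Cψ * (Cφ * (r1 * MK) + r2 * Tθ) + Cψ * (Cφ * (r1 * MK)) := by
          refine add_le_add hkey1 ?_
          rw [abs_mul]
          exact mul_le_mul hpsibar hkey2 (abs_nonneg _) hCψ0
  have e1 : Cψ * (Cφ * (r1 * MK)) ≤ r / 4 := by
    have h : Cψ * (Cφ * MK) ≤ D1 := by nlinarith
    calc Cψ * (Cφ * (r1 * MK)) = (Cψ * (Cφ * MK)) * r1 := by ring
      _ ≤ D1 * r1 := mul_le_mul_of_nonneg_right h hr1pos.le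
      _ = r / 4 := by rw [hr1def]; field_simp
  have e2 : Cψ * (r2 * Tθ) ≤ r / 4 := by
    have h : Cψ * Tθ ≤ D2 := by nlinarith
    calc Cψ * (r2 * Tθ) = (Cψ * Tθ) * r2 := by ring
      _ ≤ D2 * r2 := mul_le_mul_of_nonneg_right h hr2pos.le
      _ = r / 4 := by rw [hr2def]; field_simp
  have hmul : Cψ * (Cφ * (r1 * MK) + r2 * Tθ) = Cψ * (Cφ * (r1 * MK)) + Cψ * (r2 * Tθ) := by ring
  calc |(∫ x, θ x * φ (ε⁻¹ • x) * ψ ((ε * δ ε)⁻¹ • x))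
      - (∫ y in cube d, ψ y) * (∫ z in cube d, φ z) * ∫ x, θ x|
      ≤ Cψ * (Cφ * (r1 * MK) + r2 * Tθ) + Cψ * (Cφ * (r1 * MK)) := htri
    _ ≤ r / 4 + r / 4 + r / 4 := by rw [hmul]; linarith
    _ < r := by linarith
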